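/- For any real numbers h_n, h_{n+1}, ..., h_m (with n ≤ m), the m−n+1 fold composition f_{h_m} ∘ f_{h_{m-1}} ∘ ⋯ ∘ f_{h_n} satisfies the uniform contraction estimate: for all x, y ∈ [-Γ, Γ], |f_{h_m}∘⋯∘f_{h_n}(x) − f_{h_m}∘⋯∘f_{h_n}(y)| ≤ 2Γ·exp(−ε(m−n+1)), where ε = e^{-Γ}. -/

import Mathlib

/-- The one-step map `f_h` of the projective chain. -/
noncomputable def fh (Γ h y : ℝ) : ℝ :=
  y + 2 * h + Real.log ((1 + Real.exp (-Γ - (y + 2 * h))) / (1 + Real.exp (-Γ + (y + 2 * h))))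

/-- `iterComp Γ h n k x = f_{h (n+k)} ∘ ⋯ ∘ f_{h n} (x)`. -/
noncomputable def iterComp (Γ : ℝ) (h : ℕ → ℝ) (n : ℕ) : ℕ → ℝ → ℝ
  | 0, x => fh Γ (h n) x
  | k + 1, x => fh Γ (h (n + k + 1)) (iterComp Γ h n k x)

open Real

/-- derivative of fh -/
lemma fh_hasDerivAt (Γ c y : ℝ) :
    HasDerivAt (fh Γ c)
      ((1 - exp (-(2*Γ))) /
        ((1 + exp (-Γ - (y + 2*c))) * (1 + exp (-Γ + (y + 2*c))))) y := by
  set a := exp (-Γ - (y + 2*c)) with ha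
  set b := exp (-Γ + (y + 2*c)) with hb
  have hapos : 0 < a := exp_pos _
  have hbpos : 0 < b := exp_pos _
  have h1 : (0:ℝ) < 1 + a := by linarith
  have h2 : (0:ℝ) < 1 + b := by linarith
  have hu : HasDerivAt (fun y : ℝ => y + 2*c) 1 y := by
    simpa using (hasDerivAt_id y).add_const (2*c)
  have hA : HasDerivAt (fun y : ℝ => 1 + exp (-Γ - (y + 2*c))) (-a) y := by
    have h0 : HasDerivAt (fun y : ℝ => -Γ - (y + 2*c)) (-1) y := by
      exact hu.const_sub (-Γ)
    simpa [ha] using ((h0.exp).const_add 1)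
  have hB : HasDerivAt (fun y : ℝ => 1 + exp (-Γ + (y + 2*c))) b y := by
    have h0 : HasDerivAt (fun y : ℝ => -Γ + (y + 2*c)) 1 y := by
      exact hu.const_add (-Γ)
    simpa [hb] using ((h0.exp).const_add 1)
  have hlogA : HasDerivAt (fun y : ℝ => Real.log (1 + exp (-Γ - (y + 2*c)))) (-a / (1 + a)) y :=
    hA.log h1.ne'
  have hlogB : HasDerivAt (fun y : ℝ => Real.log (1 + exp (-Γ + (y + 2*c)))) (b / (1 + b)) y :=
    hB.log h2.ne'
  have hsum : HasDerivAt (fun y : ℝ =>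
      y + 2*c + (Real.log (1 + exp (-Γ - (y + 2*c))) - Real.log (1 + exp (-Γ + (y + 2*c)))))
      (1 + (-a / (1 + a) - b / (1 + b))) y := hu.add (hlogA.sub hlogB)
  have hab : a * b = exp (-(2*Γ)) := by
    rw [ha, hb, ← Real.exp_add]; ring_nf
  have hfun : (fun y : ℝ =>
      y + 2*c + (Real.log (1 + exp (-Γ - (y + 2*c))) - Real.log (1 + exp (-Γ + (y + 2*c)))))
      = fh Γ c := by
    funext z
    have : Real.log ((1 + exp (-Γ - (z + 2*c))) / (1 + exp (-Γ + (z + 2*c))))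
        = Real.log (1 + exp (-Γ - (z + 2*c))) - Real.log (1 + exp (-Γ + (z + 2*c))) := by
      apply Real.log_div
      · positivity
      · positivity
    simp [fh, this]
  rw [hfun] at hsum
  convert hsum using 1
  rw [← hab]
  field_simp
  ring

lemma fh_lipschitz (Γ c : ℝ) (hΓ : 0 < Γ) (x y : ℝ) :
    |fh Γ c x - fh Γ c y| ≤ exp (-exp (-Γ)) * |x - y| := by
  have key : ∀ z : ℝ, ‖(1 - exp (-(2*Γ))) /
        ((1 + exp (-Γ - (z + 2*c))) * (1 + exp (-Γ + (z + 2*c))))‖ ≤ exp (-exp (-Γ)) := by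
    intro z
    set a := exp (-Γ - (z + 2*c)) with ha
    set b := exp (-Γ + (z + 2*c)) with hb
    set ε := exp (-Γ) with hε
    have hεpos : 0 < ε := exp_pos _
    have hε1 : ε < 1 := by rw [hε]; exact exp_lt_one_iff.mpr (by linarith)
    have hapos : 0 < a := exp_pos _
    have hbpos : 0 < b := exp_pos _
    have hab : a * b = ε ^ 2 := by
      rw [ha, hb, hε, ← Real.exp_add, sq, ← Real.exp_add]; ring_nf
    have habsum : 2 * ε ≤ a + b := by
      have e1 : Real.sqrt a ^ 2 = a := Real.sq_sqrt hapos.le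
      have e2 : Real.sqrt b ^ 2 = b := Real.sq_sqrt hbpos.le
      have e3 : Real.sqrt a * Real.sqrt b = ε := by
        rw [← Real.sqrt_mul hapos.le, hab, Real.sqrt_sq hεpos.le]
      nlinarith [sq_nonneg (Real.sqrt a - Real.sqrt b)]
    have hnum : 1 - exp (-(2*Γ)) = 1 - ε ^ 2 := by
      rw [hε, sq, ← Real.exp_add]; ring_nf
    have hden : (1 + ε)^2 ≤ (1 + a) * (1 + b) := by nlinarith
    have hdenpos : (0:ℝ) < (1 + a) * (1 + b) := by positivity
    have h1 : (1 - exp (-(2*Γ))) / ((1 + a) * (1 + b)) ≤ (1 - ε^2) / (1 + ε)^2 := by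
      rw [hnum]
      apply div_le_div_of_nonneg_left (by nlinarith) (by positivity) hden
    have h2 : (1 - ε^2) / (1 + ε)^2 = (1 - ε) / (1 + ε) := by
      rw [div_eq_div_iff (by positivity) (by positivity)]; ring
    have h3 : (1 - ε) / (1 + ε) ≤ 1 - ε := by
      rw [div_le_iff₀ (by positivity)]; nlinarith
    have h4 : 1 - ε ≤ exp (-ε) := by linarith [Real.add_one_le_exp (-ε)]
    have hnn : 0 ≤ (1 - exp (-(2*Γ))) / ((1 + a) * (1 + b)) := by
      apply div_nonneg _ hdenpos.le
      rw [hnum]; nlinarith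
    rw [Real.norm_eq_abs, abs_of_nonneg hnn]
    calc (1 - exp (-(2*Γ))) / ((1 + a) * (1 + b)) ≤ (1 - ε) / (1 + ε) := by rw [← h2]; exact h1
      _ ≤ 1 - ε := h3
      _ ≤ exp (-ε) := h4
  have := Convex.norm_image_sub_le_of_norm_hasDerivWithin_le
    (f := fh Γ c)
    (f' := fun z => (1 - exp (-(2*Γ))) /
        ((1 + exp (-Γ - (z + 2*c))) * (1 + exp (-Γ + (z + 2*c)))))
    (s := Set.univ) (C := exp (-exp (-Γ)))
    (fun z _ => (fh_hasDerivAt Γ c z).hasDerivWithinAt)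
    (fun z _ => key z) convex_univ (Set.mem_univ y) (Set.mem_univ x)
  simpa [Real.norm_eq_abs] using this

/-- Uniform contraction of the `(m-n+1)`-fold composition `f_{h_m} ∘ ⋯ ∘ f_{h_n}`
on `[-Γ, Γ]`, with rate `ε = e^{-Γ}` per step. -/
theorem stmt_3 (Γ : ℝ) (hΓ : 0 < Γ) (h : ℕ → ℝ) (n m : ℕ) (hnm : n ≤ m)
    (x y : ℝ) (hx : x ∈ Set.Icc (-Γ) Γ) (hy : y ∈ Set.Icc (-Γ) Γ) :
    |iterComp Γ h n (m - n) x - iterComp Γ h n (m - n) y| ≤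
      2 * Γ * Real.exp (-(Real.exp (-Γ)) * ((m : ℝ) - (n : ℝ) + 1)) := by
  have hxy : |x - y| ≤ 2 * Γ := by
    rw [abs_sub_le_iff]
    constructor <;> [skip; skip] <;> · obtain ⟨h1, h2⟩ := hx; obtain ⟨h3, h4⟩ := hy; linarith
  have main : ∀ k : ℕ, |iterComp Γ h n k x - iterComp Γ h n k y| ≤
      exp (-exp (-Γ)) ^ (k + 1) * |x - y| := by
    intro k
    induction k with
    | zero => simpa [iterComp] using fh_lipschitz Γ (h n) hΓ x y
    | succ k ih =>
        calc |iterComp Γ h n (k+1) x - iterComp Γ h n (k+1) y|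
            ≤ exp (-exp (-Γ)) * |iterComp Γ h n k x - iterComp Γ h n k y| := by
              simpa [iterComp] using
                fh_lipschitz Γ (h (n + k + 1)) hΓ (iterComp Γ h n k x) (iterComp Γ h n k y)
          _ ≤ exp (-exp (-Γ)) * (exp (-exp (-Γ)) ^ (k + 1) * |x - y|) := by
              exact mul_le_mul_of_nonneg_left ih (exp_pos _).le
          _ = exp (-exp (-Γ)) ^ (k + 1 + 1) * |x - y| := by ring
  have hk := main (m - n)
  have hcast : ((m - n : ℕ) : ℝ) = (m : ℝ) - (n : ℝ) := Nat.cast_sub hnm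
  have hpow : exp (-exp (-Γ)) ^ (m - n + 1) = exp (-(exp (-Γ)) * ((m : ℝ) - (n : ℝ) + 1)) := by
    rw [← Real.exp_nat_mul]
    congr 1
    push_cast [hcast]
    ring
  calc |iterComp Γ h n (m - n) x - iterComp Γ h n (m - n) y|
      ≤ exp (-exp (-Γ)) ^ (m - n + 1) * |x - y| := hk
    _ ≤ exp (-exp (-Γ)) ^ (m - n + 1) * (2 * Γ) := by
        exact mul_le_mul_of_nonneg_left hxy (by positivity)
    _ = 2 * Γ * Real.exp (-(Real.exp (-Γ)) * ((m : ℝ) - (n : ℝ) + 1)) := by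
        rw [hpow]; ring
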